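/- Let (Z_n), (ξ_n), (ζ_n) be nonnegative real-valued random variables adapted to an increasing sequence of σ-algebras (F_n), satisfying E(Z_{n+1} | F_n) ≤ Z_n + ξ_n − ζ_n for all n. Then almost surely on the event {∑_n ξ_n < ∞}, the limit lim_n Z_n exists and is finite and ∑_n ζ_n < ∞. -/

import Mathlib

open MeasureTheory Filter

noncomputable section RSaux
namespace RSaux
variable {Ω : Type*}

def psum (f : ℕ → Ω → ℝ) (n : ℕ) (ω : Ω) : ℝ := ∑ k ∈ Finset.range n, f k ω

def Yp (Z ξ ζ : ℕ → Ω → ℝ) (n : ℕ) (ω : Ω) : ℝ := Z n ω + psum ζ n ω - psum ξ n ω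

def Ap (ξ : ℕ → Ω → ℝ) (a : ℝ) (n : ℕ) : Set Ω := {ω | ∀ m ≤ n, psum ξ (m + 1) ω ≤ a}

def Wp (Z ξ ζ : ℕ → Ω → ℝ) (a : ℝ) (n : ℕ) (ω : Ω) : ℝ :=
  Yp Z ξ ζ 0 ω + ∑ k ∈ Finset.range n,
    (Ap ξ a k).indicator (fun ω' => Yp Z ξ ζ (k + 1) ω' - Yp Z ξ ζ k ω') ω

lemma psum_succ (f : ℕ → Ω → ℝ) (n : ℕ) (ω : Ω) :
    psum f (n + 1) ω = psum f n ω + f n ω := Finset.sum_range_succ _ _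

lemma Wp_zero (Z ξ ζ : ℕ → Ω → ℝ) (a : ℝ) (ω : Ω) : Wp Z ξ ζ a 0 ω = Z 0 ω := by
  simp [Wp, Yp, psum]

lemma Wp_succ (Z ξ ζ : ℕ → Ω → ℝ) (a : ℝ) (n : ℕ) (ω : Ω) :
    Wp Z ξ ζ a (n + 1) ω = Wp Z ξ ζ a n ω +
      (Ap ξ a n).indicator (fun ω' => Yp Z ξ ζ (n + 1) ω' - Yp Z ξ ζ n ω') ω := by
  simp [Wp, Finset.sum_range_succ, add_assoc]

lemma Ap_mono {ξ : ℕ → Ω → ℝ} {a : ℝ} {m n : ℕ} (hmn : m ≤ n) {ω : Ω}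
    (h : ω ∈ Ap ξ a n) : ω ∈ Ap ξ a m := fun k hk => h k (hk.trans hmn)

/-- If `ω ∈ Ap ξ a n` then the stopped process agrees with `Y` up to time `n+1`. -/
lemma Wp_eq_of_mem {Z ξ ζ : ℕ → Ω → ℝ} {a : ℝ} {ω : Ω} :
    ∀ n, ω ∈ Ap ξ a n → Wp Z ξ ζ a (n + 1) ω = Yp Z ξ ζ (n + 1) ω := by
  intro n
  induction n with
  | zero =>
    intro h
    rw [Wp_succ, Set.indicator_of_mem h]
    have h0 : Wp Z ξ ζ a 0 ω = Yp Z ξ ζ 0 ω := by simp [Wp]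
    rw [h0]; ring
  | succ n ih =>
    intro h
    rw [Wp_succ, Set.indicator_of_mem h, ih (Ap_mono (Nat.le_succ n) h)]
    ring

end RSaux
end RSaux

open RSaux

theorem robbins_siegmund
    {Ω : Type*} {m0 : MeasurableSpace Ω} {μ : Measure Ω} [IsProbabilityMeasure μ]
    (ℱ : Filtration ℕ m0) (Z ξ ζ : ℕ → Ω → ℝ)
    (hZadapt : Adapted ℱ Z) (hξadapt : Adapted ℱ ξ) (hζadapt : Adapted ℱ ζ)
    (hZint : ∀ n, Integrable (Z n) μ) (hξint : ∀ n, Integrable (ξ n) μ)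
    (hζint : ∀ n, Integrable (ζ n) μ)
    (hZ0 : ∀ n, 0 ≤ᵐ[μ] Z n) (hξ0 : ∀ n, 0 ≤ᵐ[μ] ξ n) (hζ0 : ∀ n, 0 ≤ᵐ[μ] ζ n)
    (hsup : ∀ n, μ[Z (n + 1) | ℱ n] ≤ᵐ[μ] Z n + ξ n - ζ n) :
    ∀ᵐ ω ∂μ, Summable (fun n => ξ n ω) →
      (∃ c : ℝ, Tendsto (fun n => Z n ω) atTop (nhds c)) ∧
        Summable (fun n => ζ n ω) := by
  classical
  -- basic measurability and integrability of partial sums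
  have hSmeas : ∀ {n m : ℕ}, n ≤ m + 1 → StronglyMeasurable[ℱ m] (psum ξ n) := by
    intro n m hnm
    apply Finset.stronglyMeasurable_fun_sum
    intro k hk
    exact (hξadapt k).stronglyMeasurable.mono (ℱ.mono (Nat.lt_succ_iff.mp (lt_of_lt_of_le (Finset.mem_range.mp hk) hnm)))
  have hTmeas : ∀ {n m : ℕ}, n ≤ m + 1 → StronglyMeasurable[ℱ m] (psum ζ n) := by
    intro n m hnm
    apply Finset.stronglyMeasurable_fun_sum
    intro k hk
    exact (hζadapt k).stronglyMeasurable.mono (ℱ.mono (Nat.lt_succ_iff.mp (lt_of_lt_of_le (Finset.mem_range.mp hk) hnm)))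
  have hSint : ∀ n, Integrable (psum ξ n) μ := fun n =>
    integrable_finset_sum _ fun k _ => hξint k
  have hTint : ∀ n, Integrable (psum ζ n) μ := fun n =>
    integrable_finset_sum _ fun k _ => hζint k
  have hYmeas : ∀ {n m : ℕ}, n ≤ m → StronglyMeasurable[ℱ m] (Yp Z ξ ζ n) := by
    intro n m hnm
    exact (((hZadapt n).stronglyMeasurable.mono (ℱ.mono hnm)).add (hTmeas (hnm.trans (Nat.le_succ m)))).sub
      (hSmeas (hnm.trans (Nat.le_succ m)))
  have hYint : ∀ n, Integrable (Yp Z ξ ζ n) μ := fun n =>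
    ((hZint n).add (hTint n)).sub (hSint n)
  have hAmeas : ∀ (a : ℝ) (n : ℕ), MeasurableSet[ℱ n] (Ap ξ a n) := by
    intro a n
    have : Ap ξ a n = ⋂ m ∈ Finset.range (n + 1), psum ξ (m + 1) ⁻¹' Set.Iic a := by
      ext ω; simp [Ap, Nat.lt_succ_iff]
    rw [this]
    refine MeasurableSet.biInter (Finset.range (n + 1)).countable_toSet fun m hm => ?_
    have hm' : m + 1 ≤ n + 1 := by
      have : m < n + 1 := Finset.mem_range.mp (Finset.mem_coe.mp hm)
      omega
    exact (hSmeas hm').measurable measurableSet_Iic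
  -- the stopped process W a is an adapted integrable supermartingale
  have hWmeas : ∀ (a : ℝ), StronglyAdapted ℱ (Wp Z ξ ζ a) := by
    intro a n
    refine StronglyMeasurable.add ?_ ?_
    · exact hYmeas (Nat.zero_le n)
    · apply Finset.stronglyMeasurable_fun_sum
      intro k hk
      have hk' : k + 1 ≤ n := Finset.mem_range.mp hk
      exact StronglyMeasurable.indicator
        ((hYmeas hk').sub (hYmeas ((Nat.le_succ k).trans hk')))
        ((ℱ.mono (Nat.le_of_succ_le hk')) _ (hAmeas a k))
  have hWint : ∀ (a : ℝ) (n : ℕ), Integrable (Wp Z ξ ζ a n) μ := by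
    intro a n
    refine Integrable.add (hYint 0) ?_
    apply integrable_finset_sum
    intro k _
    exact (((hYint (k + 1)).sub (hYint k)).indicator (ℱ.le k _ (hAmeas a k)))
  -- key conditional expectation inequality
  have hcond : ∀ (a : ℝ) (n : ℕ), μ[Wp Z ξ ζ a (n + 1) | ℱ n] ≤ᵐ[μ] Wp Z ξ ζ a n := by
    intro a n
    have hWsucc : Wp Z ξ ζ a (n + 1) = Wp Z ξ ζ a n +
        (Ap ξ a n).indicator (fun ω' => Yp Z ξ ζ (n + 1) ω' - Yp Z ξ ζ n ω') := by
      funext ω; exact Wp_succ Z ξ ζ a n ω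
    have hindint : Integrable ((Ap ξ a n).indicator
        (fun ω' => Yp Z ξ ζ (n + 1) ω' - Yp Z ξ ζ n ω')) μ :=
      ((hYint (n + 1)).sub (hYint n)).indicator (ℱ.le n _ (hAmeas a n))
    have h1 : μ[Wp Z ξ ζ a (n + 1) | ℱ n] =ᵐ[μ] μ[Wp Z ξ ζ a n | ℱ n] +
        μ[(Ap ξ a n).indicator (fun ω' => Yp Z ξ ζ (n + 1) ω' - Yp Z ξ ζ n ω') | ℱ n] := by
      rw [hWsucc]; exact condExp_add (hWint a n) hindint _
    have h2 : μ[Wp Z ξ ζ a n | ℱ n] = Wp Z ξ ζ a n :=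
      condExp_of_stronglyMeasurable (ℱ.le n) (hWmeas a n) (hWint a n)
    have h3 : μ[(Ap ξ a n).indicator (fun ω' => Yp Z ξ ζ (n + 1) ω' - Yp Z ξ ζ n ω') | ℱ n]
        =ᵐ[μ] (Ap ξ a n).indicator (μ[fun ω' => Yp Z ξ ζ (n + 1) ω' - Yp Z ξ ζ n ω' | ℱ n]) :=
      condExp_indicator ((hYint (n + 1)).sub (hYint n)) (hAmeas a n)
    -- the conditional increment is nonpositive
    have h4 : μ[fun ω' => Yp Z ξ ζ (n + 1) ω' - Yp Z ξ ζ n ω' | ℱ n] ≤ᵐ[μ] 0 := by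
      have hsub : (fun ω' => Yp Z ξ ζ (n + 1) ω' - Yp Z ξ ζ n ω') =
          Yp Z ξ ζ (n + 1) - Yp Z ξ ζ n := rfl
      have e1 : μ[fun ω' => Yp Z ξ ζ (n + 1) ω' - Yp Z ξ ζ n ω' | ℱ n] =ᵐ[μ]
          μ[Yp Z ξ ζ (n + 1) | ℱ n] - μ[Yp Z ξ ζ n | ℱ n] := by
        rw [hsub]; exact condExp_sub (hYint (n + 1)) (hYint n) _
      have e2 : μ[Yp Z ξ ζ n | ℱ n] = Yp Z ξ ζ n :=
        condExp_of_stronglyMeasurable (ℱ.le n) (hYmeas le_rfl) (hYint n)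
      -- compute μ[Yp (n+1) | ℱ n]
      have hYsplit : Yp Z ξ ζ (n + 1) = Z (n + 1) +
          (psum ζ (n + 1) - psum ξ (n + 1)) := by
        funext ω; simp [Yp]; ring
      have e3 : μ[Yp Z ξ ζ (n + 1) | ℱ n] =ᵐ[μ] μ[Z (n + 1) | ℱ n] +
          (psum ζ (n + 1) - psum ξ (n + 1)) := by
        rw [hYsplit]
        refine (condExp_add (hZint (n + 1)) ((hTint (n + 1)).sub (hSint (n + 1))) _).trans ?_
        refine Filter.EventuallyEq.add (Filter.EventuallyEq.refl _ _) ?_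
        rw [condExp_of_stronglyMeasurable (ℱ.le n)
          ((hTmeas le_rfl).sub (hSmeas le_rfl)) ((hTint (n + 1)).sub (hSint (n + 1)))]
      have e4 : μ[Yp Z ξ ζ (n + 1) | ℱ n] ≤ᵐ[μ] Yp Z ξ ζ n := by
        filter_upwards [e3, hsup n] with ω h3' h4'
        have : Yp Z ξ ζ n ω = (Z n ω + ξ n ω - ζ n ω) +
            (psum ζ (n + 1) ω - psum ξ (n + 1) ω) := by
          simp [Yp, psum_succ]; ring
        rw [h3', this]
        exact add_le_add h4' le_rfl
      filter_upwards [e1, e4] with ω h1' h4'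
      rw [h1']
      simp only [Pi.sub_apply, Pi.zero_apply, e2]
      exact sub_nonpos.mpr h4'
    filter_upwards [h1, h3, h4] with ω h1' h3' h4'
    rw [h1', Pi.add_apply, h2, h3']
    have : (Ap ξ a n).indicator (μ[fun ω' => Yp Z ξ ζ (n + 1) ω' - Yp Z ξ ζ n ω' | ℱ n]) ω ≤ 0 := by
      by_cases hω : ω ∈ Ap ξ a n
      · rw [Set.indicator_of_mem hω]; exact h4'
      · rw [Set.indicator_of_notMem hω]
    linarith
  have hWsuper : ∀ (a : ℝ), Supermartingale (Wp Z ξ ζ a) ℱ μ := fun a =>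
    supermartingale_nat (hWmeas a) (hWint a) (hcond a)
  -- the good set of nonnegativity
  have hgood : ∀ᵐ ω ∂μ, ∀ n, 0 ≤ Z n ω ∧ 0 ≤ ξ n ω ∧ 0 ≤ ζ n ω := by
    rw [ae_all_iff]
    intro n
    filter_upwards [hZ0 n, hξ0 n, hζ0 n] with ω h1 h2 h3 using ⟨h1, h2, h3⟩
  -- pointwise lower bound on the good set
  have hWbdd : ∀ (a : ℕ) (ω : Ω), (∀ n, 0 ≤ Z n ω ∧ 0 ≤ ξ n ω ∧ 0 ≤ ζ n ω) →
      ∀ n, -(a : ℝ) ≤ Wp Z ξ ζ (a : ℝ) n ω := by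
    intro a ω hω n
    have hT0 : ∀ k, 0 ≤ psum ζ k ω :=
      fun k => Finset.sum_nonneg fun i _ => (hω i).2.2
    induction n with
    | zero =>
      rw [Wp_zero]
      have := (hω 0).1
      have : (0:ℝ) ≤ Z 0 ω := this
      linarith [Nat.cast_nonneg (α := ℝ) a]
    | succ n ih =>
      by_cases hmem : ω ∈ Ap ξ (a : ℝ) n
      · rw [Wp_eq_of_mem n hmem]
        have hS : psum ξ (n + 1) ω ≤ (a : ℝ) := hmem n le_rfl
        have hZn := (hω (n + 1)).1
        have hTn := hT0 (n + 1)
        simp only [Yp]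
        linarith
      · rw [Wp_succ, Set.indicator_of_notMem hmem, add_zero]
        exact ih
  -- L¹ bound
  have hL1 : ∀ (a : ℕ) (n : ℕ), eLpNorm (Wp Z ξ ζ (a : ℝ) n) 1 μ ≤
      ENNReal.ofReal (∫ ω, Z 0 ω ∂μ + 2 * a) := by
    intro a n
    have hWa : ∀ᵐ ω ∂μ, -(a : ℝ) ≤ Wp Z ξ ζ (a : ℝ) n ω := by
      filter_upwards [hgood] with ω hω using hWbdd a ω hω n
    have habs : ∀ᵐ ω ∂μ, |Wp Z ξ ζ (a : ℝ) n ω| ≤ Wp Z ξ ζ (a : ℝ) n ω + 2 * a := by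
      filter_upwards [hWa] with ω hω
      rcases le_or_gt 0 (Wp Z ξ ζ (a : ℝ) n ω) with h | h
      · rw [abs_of_nonneg h]; linarith [Nat.cast_nonneg (α := ℝ) a]
      · rw [abs_of_neg h]; linarith
    have hint : ∫ ω, |Wp Z ξ ζ (a : ℝ) n ω| ∂μ ≤ ∫ ω, Z 0 ω ∂μ + 2 * a := by
      have h1 : ∫ ω, |Wp Z ξ ζ (a : ℝ) n ω| ∂μ ≤ ∫ ω, (Wp Z ξ ζ (a : ℝ) n ω + 2 * a) ∂μ :=
        integral_mono_ae (hWint _ n).abs ((hWint _ n).add (integrable_const _)) habs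
      have h2 : ∫ ω, (Wp Z ξ ζ (a : ℝ) n ω + 2 * a) ∂μ =
          ∫ ω, Wp Z ξ ζ (a : ℝ) n ω ∂μ + 2 * a := by
        rw [integral_add (hWint _ n) (integrable_const _), integral_const]
        simp
      have h3 : ∫ ω, Wp Z ξ ζ (a : ℝ) n ω ∂μ ≤ ∫ ω, Wp Z ξ ζ (a : ℝ) 0 ω ∂μ := by
        have := (hWsuper a).setIntegral_le (Nat.zero_le n) (MeasurableSet.univ (α := Ω))
        simpa [setIntegral_univ] using this
      have h4 : ∫ ω, Wp Z ξ ζ (a : ℝ) 0 ω ∂μ = ∫ ω, Z 0 ω ∂μ :=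
        integral_congr_ae (Filter.Eventually.of_forall fun ω => Wp_zero Z ξ ζ _ ω)
      linarith
    calc eLpNorm (Wp Z ξ ζ (a : ℝ) n) 1 μ
        = ENNReal.ofReal (∫ ω, ‖Wp Z ξ ζ (a : ℝ) n ω‖ ∂μ) := by
          rw [eLpNorm_one_eq_lintegral_enorm,
            ofReal_integral_norm_eq_lintegral_enorm (hWint _ n)]
      _ ≤ ENNReal.ofReal (∫ ω, Z 0 ω ∂μ + 2 * a) := by
          apply ENNReal.ofReal_le_ofReal
          simpa [Real.norm_eq_abs] using hint
  -- a.e. convergence for each a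
  have hconv : ∀ (a : ℕ), ∀ᵐ ω ∂μ, ∃ c, Tendsto (fun n => Wp Z ξ ζ (a : ℝ) n ω) atTop (nhds c) := by
    intro a
    have hsub : Submartingale (fun n => -(Wp Z ξ ζ (a : ℝ) n)) ℱ μ := (hWsuper a).neg
    have hbdd : ∀ n, eLpNorm (-(Wp Z ξ ζ (a : ℝ) n)) 1 μ ≤
        (ENNReal.ofReal (∫ ω, Z 0 ω ∂μ + 2 * a)).toNNReal := by
      intro n
      rw [eLpNorm_neg]
      refine le_trans (hL1 a n) ?_
      rw [ENNReal.coe_toNNReal ENNReal.ofReal_ne_top]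
    filter_upwards [hsub.exists_ae_tendsto_of_bdd hbdd] with ω ⟨c, hc⟩
    exact ⟨-c, by simpa using hc.neg⟩
  -- conclusion
  filter_upwards [ae_all_iff.mpr hconv, hgood] with ω hconvω hω hsummable
  obtain ⟨a, ha⟩ := exists_nat_ge (∑' n, ξ n ω)
  have hmemA : ∀ n, ω ∈ Ap ξ (a : ℝ) n := by
    intro n m _
    refine le_trans ?_ ha
    exact hsummable.sum_le_tsum (Finset.range (m + 1)) (fun i _ => (hω i).2.1)
  have hWY : ∀ n, Wp Z ξ ζ (a : ℝ) n ω = Yp Z ξ ζ n ω := by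
    intro n
    cases n with
    | zero => simp [Wp]
    | succ n => exact Wp_eq_of_mem n (hmemA n)
  obtain ⟨L, hL⟩ := hconvω a
  have hYtendsto : Tendsto (fun n => Yp Z ξ ζ n ω) atTop (nhds L) :=
    hL.congr fun n => hWY n
  have hStendsto : Tendsto (fun n => psum ξ n ω) atTop (nhds (∑' n, ξ n ω)) :=
    hsummable.hasSum.tendsto_sum_nat
  have hYS : Tendsto (fun n => Yp Z ξ ζ n ω + psum ξ n ω) atTop
      (nhds (L + ∑' n, ξ n ω)) := hYtendsto.add hStendsto
  have hYSeq : ∀ n, Yp Z ξ ζ n ω + psum ξ n ω = Z n ω + psum ζ n ω := by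
    intro n; simp only [Yp]; ring
  have hZT : Tendsto (fun n => Z n ω + psum ζ n ω) atTop (nhds (L + ∑' n, ξ n ω)) :=
    hYS.congr fun n => hYSeq n
  obtain ⟨M, hM⟩ := hZT.bddAbove_range
  have hTle : ∀ n, psum ζ n ω ≤ M := by
    intro n
    have h1 : Z n ω + psum ζ n ω ≤ M := hM ⟨n, rfl⟩
    linarith [(hω n).1]
  have hζsummable : Summable (fun n => ζ n ω) :=
    summable_of_sum_range_le (fun n => (hω n).2.2) hTle
  refine ⟨⟨L + ∑' n, ξ n ω - ∑' n, ζ n ω, ?_⟩, hζsummable⟩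
  have hTtendsto : Tendsto (fun n => psum ζ n ω) atTop (nhds (∑' n, ζ n ω)) :=
    hζsummable.hasSum.tendsto_sum_nat
  have : Tendsto (fun n => Z n ω + psum ζ n ω - psum ζ n ω) atTop
      (nhds (L + ∑' n, ξ n ω - ∑' n, ζ n ω)) := hZT.sub hTtendsto
  exact this.congr fun n => add_sub_cancel_right _ _
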